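/- Let d ≥ 2 and let F ⊆ binom(ℕ,d) be a finite family. Then Inc(F) admits the decompositions: Inc(F) = ∪_{k≥1} {(k,v̂) : v̂ ∈ Inc(F̂_{1,k}) ∪ π_1(F̂_{1,k-1})} and Inc(F) = ∪_{k≥1} {(v̂,k) : v̂ ∈ F̂_{d,k} ∪ Inc(F̂_{d,k-1})} (with F̂_{1,0} = F̂_{d,0} = ∅). -/

import Mathlib

def Inc1 : Set (ℕ → ℕ) := {π | StrictMono π ∧ ∀ j, π j ≤ j + 1}

def incF (F : Set (Finset ℕ)) : Set (Finset ℕ) :=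
  {v | ∃ u ∈ F, ∃ π ∈ Inc1, v = u.image π}

def compressionIn (A : Set ℕ) (d n : ℕ) : Set (Finset ℕ) :=
  {v | ↑v ⊆ A ∧ v.card = d ∧
    {w : Finset ℕ | ↑w ⊆ A ∧ w.card = d ∧ toColex w ≤ toColex v}.ncard ≤ n}

def IsCompressedIn (A : Set ℕ) (d : ℕ) (F : Set (Finset ℕ)) : Prop :=
  (∀ u ∈ F, ↑u ⊆ A ∧ u.card = d) ∧
  ∀ u ∈ F, ∀ v : Finset ℕ, ↑v ⊆ A → v.card = d → toColex v ≤ toColex u → v ∈ F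

def hatL (F : Set (Finset ℕ)) (k : ℕ) : Set (Finset ℕ) :=
  {u | (∀ x ∈ u, k < x) ∧ insert k u ∈ F}

def hatR (F : Set (Finset ℕ)) (k : ℕ) : Set (Finset ℕ) :=
  {u | (∀ x ∈ u, x < k) ∧ insert k u ∈ F}

def leftComp (d : ℕ) (F : Set (Finset ℕ)) : Set (Finset ℕ) :=
  ⋃ k : ℕ, {v | ∃ w ∈ compressionIn {j | k < j} (d - 1) (hatL F k).ncard, v = insert k w}

def rightComp (d : ℕ) (F : Set (Finset ℕ)) : Set (Finset ℕ) :=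
  ⋃ k : ℕ, {v | ∃ w ∈ compressionIn Set.univ (d - 1) (hatR F k).ncard, v = insert k w}

def BorelLE (u v : Finset ℕ) : Prop :=
  List.Forall₂ (· ≤ ·) (u.sort (· ≤ ·)) (v.sort (· ≤ ·))

def IsShifted (F : Set (Finset ℕ)) : Prop :=
  ∀ u ∈ F, ∀ v, BorelLE v u → v ∈ F

def piShift (i : ℕ) : ℕ → ℕ := fun j => if j < i then j else j + 1

def IsBinRep (d m s : ℕ) (a : ℕ → ℕ) : Prop :=
  1 ≤ s ∧ s ≤ d ∧ (∀ i, s ≤ i → i < d → a i < a (i + 1)) ∧ s ≤ a s ∧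
    m = ∑ i ∈ Finset.Icc s d, Nat.choose (a i) i

def famLE (F G : Set (Finset ℕ)) : Prop :=
  F = G ∨ ∃ m ∈ G, m ∉ F ∧
    ∀ w : Finset ℕ, (w ∈ F ∧ w ∉ G) ∨ (w ∈ G ∧ w ∉ F) → toColex w ≤ toColex m

def IsSimplicialComplex (Δ : Set (Finset ℕ)) : Prop :=
  Δ.Finite ∧ ∀ F ∈ Δ, ∀ G ⊆ F, G ∈ Δ


lemma piShift_mem_Inc1 (t : ℕ) : piShift t ∈ Inc1 := by
  constructor
  · intro a b hab; unfold piShift; split_ifs <;> omega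
  · intro j; unfold piShift; split_ifs <;> omega

lemma inc1_cases {π : ℕ → ℕ} (hπ : π ∈ Inc1) (j : ℕ) : π j = j ∨ π j = j + 1 := by
  have h1 : j ≤ π j := hπ.1.le_apply
  have h2 := hπ.2 j; omega

lemma inc1_step {π : ℕ → ℕ} (hπ : π ∈ Inc1) {j : ℕ} (hj : π j = j + 1) :
    ∀ x, j ≤ x → π x = x + 1 := by
  intro x hx
  induction x, hx using Nat.le_induction with
  | base => exact hj
  | succ n hn ih =>
    have h1 : π n < π (n + 1) := hπ.1 (lt_add_one n)
    have h2 := hπ.2 (n + 1)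
    omega

lemma exists_piShift_agree {π : ℕ → ℕ} (hπ : π ∈ Inc1) (u : Finset ℕ) :
    ∃ t : ℕ, ∀ x ∈ u, π x = piShift t x := by
  by_cases h : ∃ j, π j = j + 1
  · refine ⟨Nat.find h, fun x hx => ?_⟩
    rcases lt_or_ge x (Nat.find h) with hlt | hge
    · have h1 : π x ≠ x + 1 := Nat.find_min h hlt
      have h2 := inc1_cases hπ x
      simp only [piShift, if_pos hlt]; omega
    · have := inc1_step hπ (Nat.find_spec h) x hge
      simp only [piShift, if_neg (not_lt.mpr hge)]; omega
  · push_neg at h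
    refine ⟨u.sup id + 1, fun x hx => ?_⟩
    have hle : x ≤ u.sup id := Finset.le_sup (f := id) hx
    have h2 := inc1_cases hπ x
    have h3 := h x
    simp only [piShift, if_pos (by omega : x < u.sup id + 1)]; omega

lemma mem_incF {F : Set (Finset ℕ)} {v : Finset ℕ} :
    v ∈ incF F ↔ ∃ u ∈ F, ∃ t : ℕ, v = u.image (piShift t) := by
  constructor
  · rintro ⟨u, hu, π, hπ, rfl⟩
    obtain ⟨t, ht⟩ := exists_piShift_agree hπ u
    exact ⟨u, hu, t, Finset.image_congr ht⟩
  · rintro ⟨u, hu, t, rfl⟩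
    exact ⟨u, hu, piShift t, piShift_mem_Inc1 t, rfl⟩

theorem stmt9 (d : ℕ) (hd : 2 ≤ d) (F : Set (Finset ℕ)) (hFfin : F.Finite)
    (hFd : ∀ u ∈ F, u.card = d) :
    incF F = (⋃ k : ℕ, {v | ∃ w ∈ incF (hatL F k), v = insert k w}) ∪
        (⋃ k : ℕ, {v | ∃ w ∈ hatL F k, v = insert (k + 1) (w.image (· + 1))}) ∧
      incF F = (⋃ k : ℕ, {v | ∃ w ∈ hatR F k, v = insert k w}) ∪
        (⋃ k : ℕ, {v | ∃ w ∈ incF (hatR F k), v = insert (k + 1) w}) := by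
  have hnonempty : ∀ u ∈ F, u.Nonempty := fun u hu =>
    Finset.card_pos.mp (by rw [hFd u hu]; omega)
  constructor
  · ext v
    constructor
    · intro hv
      rw [mem_incF] at hv
      obtain ⟨u, hu, t, rfl⟩ := hv
      have hne := hnonempty u hu
      set m := u.min' hne with hm
      have hmem : m ∈ u := u.min'_mem hne
      have hins : insert m (u.erase m) = u := Finset.insert_erase hmem
      have hgt : ∀ x ∈ u.erase m, m < x := fun x hx =>
        lt_of_le_of_ne (u.min'_le x (Finset.mem_of_mem_erase hx))
          (Ne.symm (Finset.ne_of_mem_erase hx))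
      have hhat : u.erase m ∈ hatL F m := ⟨hgt, by rw [hins]; exact hu⟩
      by_cases hc : m < t
      · left
        simp only [Set.mem_iUnion, Set.mem_setOf_eq]
        refine ⟨m, (u.erase m).image (piShift t),
          mem_incF.mpr ⟨u.erase m, hhat, t, rfl⟩, ?_⟩
        have h1 : piShift t m = m := by simp only [piShift]; rw [if_pos hc]
        conv_lhs => rw [← hins]
        rw [Finset.image_insert, h1]
      · right
        simp only [Set.mem_iUnion, Set.mem_setOf_eq]
        refine ⟨m, u.erase m, hhat, ?_⟩
        have himg : u.image (piShift t) = u.image (· + 1) :=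
          Finset.image_congr fun x hx => by
            have := u.min'_le x hx
            simp only [piShift]; rw [if_neg]; omega
        rw [himg]
        conv_lhs => rw [← hins]
        rw [Finset.image_insert]
    · intro hv
      rcases hv with hv | hv
      · simp only [Set.mem_iUnion, Set.mem_setOf_eq] at hv
        obtain ⟨k, w, hw, rfl⟩ := hv
        obtain ⟨u', hu', π, hπ, rfl⟩ := hw
        obtain ⟨t, ht⟩ := exists_piShift_agree hπ u'
        rw [mem_incF]
        refine ⟨insert k u', hu'.2, max t (k + 1), ?_⟩
        have h1 : piShift (max t (k + 1)) k = k := by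
          simp only [piShift]; rw [if_pos]; omega
        have himg : u'.image (piShift (max t (k + 1))) = u'.image π :=
          Finset.image_congr fun x hx => by
            have h2 := ht x hx
            have h3 := hu'.1 x hx
            simp only [piShift] at h2 ⊢
            split_ifs at h2 ⊢ <;> omega
        rw [Finset.image_insert, h1, himg]
      · simp only [Set.mem_iUnion, Set.mem_setOf_eq] at hv
        obtain ⟨k, w, hw, rfl⟩ := hv
        rw [mem_incF]
        refine ⟨insert k w, hw.2, 0, ?_⟩
        have h1 : piShift 0 k = k + 1 := by simp [piShift]
        have himg : w.image (piShift 0) = w.image (· + 1) :=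
          Finset.image_congr fun x _ => by simp [piShift]
        rw [Finset.image_insert, h1, himg]
  · ext v
    constructor
    · intro hv
      rw [mem_incF] at hv
      obtain ⟨u, hu, t, rfl⟩ := hv
      have hne := hnonempty u hu
      set m := u.max' hne with hm
      have hmem : m ∈ u := u.max'_mem hne
      have hins : insert m (u.erase m) = u := Finset.insert_erase hmem
      have hlt : ∀ x ∈ u.erase m, x < m := fun x hx =>
        lt_of_le_of_ne (u.le_max' x (Finset.mem_of_mem_erase hx))
          (Finset.ne_of_mem_erase hx)
      have hhat : u.erase m ∈ hatR F m := ⟨hlt, by rw [hins]; exact hu⟩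
      by_cases hc : m < t
      · left
        simp only [Set.mem_iUnion, Set.mem_setOf_eq]
        refine ⟨m, u.erase m, hhat, ?_⟩
        have himg : u.image (piShift t) = u := by
          rw [show u.image (piShift t) = u.image id from
            Finset.image_congr fun x hx => by
              have := u.le_max' x hx
              simp only [piShift, id]; rw [if_pos]; omega]
          exact Finset.image_id
        rw [himg]; exact hins.symm
      · right
        simp only [Set.mem_iUnion, Set.mem_setOf_eq]
        refine ⟨m, (u.erase m).image (piShift t),
          mem_incF.mpr ⟨u.erase m, hhat, t, rfl⟩, ?_⟩
        have h1 : piShift t m = m + 1 := by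
          simp only [piShift]; rw [if_neg hc]
        conv_lhs => rw [← hins]
        rw [Finset.image_insert, h1]
    · intro hv
      rcases hv with hv | hv
      · simp only [Set.mem_iUnion, Set.mem_setOf_eq] at hv
        obtain ⟨k, w, hw, rfl⟩ := hv
        rw [mem_incF]
        refine ⟨insert k w, hw.2, k + 1, ?_⟩
        have himg : (insert k w).image (piShift (k + 1)) = insert k w := by
          rw [show (insert k w).image (piShift (k + 1)) = (insert k w).image id from
            Finset.image_congr fun x hx => by
              simp only [Finset.coe_insert, Set.mem_insert_iff, Finset.mem_coe] at hx
              have : x < k + 1 := by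
                rcases hx with rfl | hx
                · omega
                · have := hw.1 x hx; omega
              simp only [piShift, id]; rw [if_pos this]]
          exact Finset.image_id
        exact himg.symm
      · simp only [Set.mem_iUnion, Set.mem_setOf_eq] at hv
        obtain ⟨k, w, hw, rfl⟩ := hv
        obtain ⟨u', hu', π, hπ, rfl⟩ := hw
        obtain ⟨t, ht⟩ := exists_piShift_agree hπ u'
        rw [mem_incF]
        refine ⟨insert k u', hu'.2, min t k, ?_⟩
        have h1 : piShift (min t k) k = k + 1 := by
          simp only [piShift]; rw [if_neg]; omega
        have himg : u'.image (piShift (min t k)) = u'.image π :=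
          Finset.image_congr fun x hx => by
            have h2 := ht x hx
            have h3 := hu'.1 x hx
            simp only [piShift] at h2 ⊢
            split_ifs at h2 ⊢ <;> omega
        rw [Finset.image_insert, h1, himg]
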